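/- Theorem 1 (reduction of a UFTOC subproblem): under the UFTOC setup with the preliminary (zero-terminal) Riccati recursion well defined, define Q̂_x = P_{0,0}, l̂_x = −Ψ_{0,0}, ĉ = c̄_{0,0}, Q̄ = blockdiag(G_{0,1},…,G_{0,N}), and Q̂_w = B̂ = S Q̄⁻¹ Sᵀ ∈ ℝ^{n_x×n_x}, with Â, S, â the closed-loop quantities of the preliminary feedback. Then for every symmetric positive semidefinite P̂ ∈ ℝ^{n_x×n_x}, every Ψ̂ ∈ ℝ^{n_x}, every ĉ' ∈ ℝ and every x̂ ∈ ℝ^{n_x}: the infimum over all trajectories (x,w) with x_0 = x̂ of Σ_{t=0}^{N−1}( ½ [x_t;w_t]ᵀ Q_t [x_t;w_t] + l_tᵀ [x_t;w_t] + c_t ) + ½ x_Nᵀ P̂ x_N − Ψ̂ᵀ x_N + ĉ' equals the infimum over ŵ ∈ ℝ^{n_x} of ½ x̂ᵀ Q̂_x x̂ + ½ ŵᵀ Q̂_w ŵ + l̂_xᵀ x̂ + ĉ + ½ x̂_Nᵀ P̂ x̂_N − Ψ̂ᵀ x̂_N + ĉ', where x̂_N = Â x̂ + B̂ ŵ + â;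 moreover both infima are attained. -/

import Mathlib

open Matrix Finset

/-- Ordered product of (closed-loop) matrices: `stm nx Ab i j = Ab (j-1) * ⋯ * Ab i`
for `i ≤ j`, and the identity otherwise (a state transition matrix). -/
noncomputable def stm (nx : ℕ) (Ab : ℕ → Matrix (Fin nx) (Fin nx) ℝ) :
    ℕ → ℕ → Matrix (Fin nx) (Fin nx) ℝ
  | _, 0 => 1
  | i, (j + 1) => if i ≤ j then Ab j * stm nx Ab i j else 1

/-- Cost of the UFTOC subproblem with terminal data `P̂`, `Ψ̂`, `ĉ'`. -/
noncomputable def subCost (nx nw N : ℕ)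
    (Qx : ℕ → Matrix (Fin nx) (Fin nx) ℝ)
    (Qxw : ℕ → Matrix (Fin nx) (Fin nw) ℝ)
    (Qw : ℕ → Matrix (Fin nw) (Fin nw) ℝ)
    (lx : ℕ → Fin nx → ℝ) (lw : ℕ → Fin nw → ℝ) (c : ℕ → ℝ)
    (Ph : Matrix (Fin nx) (Fin nx) ℝ) (Ψh : Fin nx → ℝ) (ch' : ℝ)
    (x : ℕ → Fin nx → ℝ) (w : ℕ → Fin nw → ℝ) : ℝ :=
  (∑ t ∈ Finset.range N,
      ((1 / 2) * (Sum.elim (x t) (w t) ⬝ᵥ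
          (Matrix.fromBlocks (Qx t) (Qxw t) (Qxw t)ᵀ (Qw t) *ᵥ Sum.elim (x t) (w t)))
        + Sum.elim (lx t) (lw t) ⬝ᵥ Sum.elim (x t) (w t) + c t))
    + (1 / 2) * (x N ⬝ᵥ (Ph *ᵥ x N)) - Ψh ⬝ᵥ x N + ch'

/-- Cost of the reduced UFTOC subproblem of Theorem 1 (with `B̂ = Q̂_w`). -/
noncomputable def redCost (nx : ℕ)
    (Qxh Qwh Ah : Matrix (Fin nx) (Fin nx) ℝ)
    (lxh ah : Fin nx → ℝ) (ch : ℝ)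
    (Ph : Matrix (Fin nx) (Fin nx) ℝ) (Ψh : Fin nx → ℝ) (ch' : ℝ)
    (xh wh : Fin nx → ℝ) : ℝ :=
  (1 / 2) * (xh ⬝ᵥ (Qxh *ᵥ xh)) + (1 / 2) * (wh ⬝ᵥ (Qwh *ᵥ wh)) + lxh ⬝ᵥ xh + ch
    + (1 / 2) * ((Ah *ᵥ xh + Qwh *ᵥ wh + ah) ⬝ᵥ (Ph *ᵥ (Ah *ᵥ xh + Qwh *ᵥ wh + ah)))
    - Ψh ⬝ᵥ (Ah *ᵥ xh + Qwh *ᵥ wh + ah) + ch'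


lemma dv_swap {m n : Type*} [Fintype m] [Fintype n]
    (u : m → ℝ) (M : Matrix m n ℝ) (v : n → ℝ) :
    u ⬝ᵥ M *ᵥ v = v ⬝ᵥ Mᵀ *ᵥ u := by
  rw [Matrix.dotProduct_mulVec, dotProduct_comm, ← Matrix.mulVec_transpose]

lemma mdv {m n : Type*} [Fintype m] [Fintype n]
    (M : Matrix m n ℝ) (u : n → ℝ) (v : m → ℝ) :
    (M *ᵥ u) ⬝ᵥ v = u ⬝ᵥ Mᵀ *ᵥ v := by
  rw [dotProduct_comm, dv_swap]

lemma onestep {nx nw : ℕ}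
    (A : Matrix (Fin nx) (Fin nx) ℝ) (B : Matrix (Fin nx) (Fin nw) ℝ) (a : Fin nx → ℝ)
    (Qx : Matrix (Fin nx) (Fin nx) ℝ) (Qxw : Matrix (Fin nx) (Fin nw) ℝ)
    (Qw : Matrix (Fin nw) (Fin nw) ℝ)
    (lx : Fin nx → ℝ) (lw : Fin nw → ℝ) (c : ℝ)
    (P' : Matrix (Fin nx) (Fin nx) ℝ) (ψ' : Fin nx → ℝ) (cb' : ℝ)
    (G : Matrix (Fin nw) (Fin nw) ℝ) (K : Matrix (Fin nw) (Fin nx) ℝ) (k : Fin nw → ℝ)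
    (P : Matrix (Fin nx) (Fin nx) ℝ) (Ψ : Fin nx → ℝ) (cb : ℝ)
    (hQx : Qxᵀ = Qx) (hP' : P'ᵀ = P') (hGs : Gᵀ = G)
    (hGK : G * K = -(Qxw + Aᵀ * P' * B)ᵀ)
    (hGk : G *ᵥ k = Bᵀ *ᵥ ψ' - lw - Bᵀ *ᵥ (P' *ᵥ a))
    (hG : G = Qw + Bᵀ * P' * B)
    (hP : P = Qx + Aᵀ * P' * A - Kᵀ * G * K)
    (hΨ : Ψ = Aᵀ *ᵥ ψ' - (Qxw + Aᵀ * P' * B) *ᵥ k - lx - Aᵀ *ᵥ (P' *ᵥ a))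
    (hcb : cb = cb' + (1/2) * (a ⬝ᵥ P' *ᵥ a) - ψ' ⬝ᵥ a - (1/2) * (k ⬝ᵥ G *ᵥ k) + c)
    (x : Fin nx → ℝ) (w : Fin nw → ℝ) :
    ((1/2) * (Sum.elim x w ⬝ᵥ (Matrix.fromBlocks Qx Qxw Qxwᵀ Qw *ᵥ Sum.elim x w))
      + Sum.elim lx lw ⬝ᵥ Sum.elim x w + c)
    + ((1/2) * ((A *ᵥ x + B *ᵥ w + a) ⬝ᵥ P' *ᵥ (A *ᵥ x + B *ᵥ w + a))
        - ψ' ⬝ᵥ (A *ᵥ x + B *ᵥ w + a) + cb')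
    = ((1/2) * (x ⬝ᵥ P *ᵥ x) - Ψ ⬝ᵥ x + cb)
      + (1/2) * ((w - K *ᵥ x - k) ⬝ᵥ G *ᵥ (w - K *ᵥ x - k)) := by
  have hKG : Kᵀ * G = -(Qxw + Aᵀ * P' * B) := by
    have h := congrArg Matrix.transpose hGK
    rwa [Matrix.transpose_mul, hGs, Matrix.transpose_neg, Matrix.transpose_transpose] at h
  have hQw : Qw = G - Bᵀ * P' * B := by rw [hG]; abel
  subst hP hΨ hcb hQw
  simp only [Matrix.fromBlocks_mulVec, sumElim_dotProduct_sumElim,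
    Matrix.mulVec_add, Matrix.add_mulVec, Matrix.mulVec_sub, Matrix.sub_mulVec,
    dotProduct_add, add_dotProduct, dotProduct_sub, sub_dotProduct,
    Matrix.neg_mulVec, Matrix.mulVec_neg, dotProduct_neg, neg_dotProduct,
    mdv, Matrix.mulVec_mulVec, Matrix.transpose_mul, Matrix.transpose_transpose,
    Matrix.transpose_add, Matrix.transpose_sub, Matrix.transpose_neg,
    hQx, hP', hGs, hGK, hKG, hGk, Matrix.mul_assoc, Matrix.mul_add, Matrix.add_mul,
    Matrix.mul_sub, Matrix.sub_mul, Matrix.mul_neg, Matrix.neg_mul, Matrix.mul_one, Matrix.one_mul,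
    Sum.elim_comp_inl, Sum.elim_comp_inr]
  have f3 : a ⬝ᵥ (P' * A) *ᵥ x = x ⬝ᵥ (Aᵀ * P') *ᵥ a := by
    rw [dv_swap]; congr 1
    simp [Matrix.transpose_mul, hP', Matrix.mul_assoc]
  have f4 : a ⬝ᵥ (P' * B) *ᵥ w = w ⬝ᵥ (Bᵀ * P') *ᵥ a := by
    rw [dv_swap]; congr 1
    simp [Matrix.transpose_mul, hP', Matrix.mul_assoc]
  have f5 : ψ' ⬝ᵥ B *ᵥ w = w ⬝ᵥ Bᵀ *ᵥ ψ' := by rw [dv_swap]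
  have f6 : lw ⬝ᵥ w = w ⬝ᵥ lw := dotProduct_comm _ _
  have f7 : k ⬝ᵥ G *ᵥ w = w ⬝ᵥ Bᵀ *ᵥ ψ' - w ⬝ᵥ lw - w ⬝ᵥ (Bᵀ * P') *ᵥ a := by
    rw [dv_swap, hGs, hGk]
    simp [dotProduct_sub, Matrix.mulVec_mulVec]
  have f8 : x ⬝ᵥ (Aᵀ * (P' * (B * K))) *ᵥ x = x ⬝ᵥ (Kᵀ * (Bᵀ * (P' * A))) *ᵥ x := by
    rw [dv_swap]; congr 1
    simp [Matrix.transpose_mul, hP', Matrix.mul_assoc]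
  have f9 : x ⬝ᵥ (Qxw * K) *ᵥ x = x ⬝ᵥ (Kᵀ * Qxwᵀ) *ᵥ x := by
    rw [dv_swap]; congr 1
    simp [Matrix.transpose_mul, Matrix.mul_assoc]
  have f1 : w ⬝ᵥ Qxwᵀ *ᵥ x = x ⬝ᵥ Qxw *ᵥ w := by
    rw [dv_swap]; simp
  have f2 : w ⬝ᵥ (Bᵀ * (P' * A)) *ᵥ x = x ⬝ᵥ (Aᵀ * (P' * B)) *ᵥ w := by
    rw [dv_swap]; congr 1
    simp [Matrix.transpose_mul, hP', Matrix.mul_assoc]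
  have f10 : x ⬝ᵥ (Kᵀ * Bᵀ) *ᵥ ψ' - x ⬝ᵥ Kᵀ *ᵥ lw - x ⬝ᵥ (Kᵀ * (Bᵀ * P')) *ᵥ a
      = -(k ⬝ᵥ Qxwᵀ *ᵥ x) - k ⬝ᵥ (Bᵀ * (P' * A)) *ᵥ x := by
    have h1 : x ⬝ᵥ (Kᵀ * Bᵀ) *ᵥ ψ' - x ⬝ᵥ Kᵀ *ᵥ lw - x ⬝ᵥ (Kᵀ * (Bᵀ * P')) *ᵥ a
        = x ⬝ᵥ Kᵀ *ᵥ (G *ᵥ k) := by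
      rw [hGk]
      simp [Matrix.mulVec_sub, dotProduct_sub, Matrix.mulVec_mulVec, Matrix.mul_assoc]
    rw [h1, Matrix.mulVec_mulVec, hKG, Matrix.neg_mulVec, dotProduct_neg,
      Matrix.add_mulVec, dotProduct_add]
    have g1 : x ⬝ᵥ Qxw *ᵥ k = k ⬝ᵥ Qxwᵀ *ᵥ x := by rw [dv_swap]
    have g2 : x ⬝ᵥ (Aᵀ * P' * B) *ᵥ k = k ⬝ᵥ (Bᵀ * (P' * A)) *ᵥ x := by
      rw [dv_swap]; congr 1
      simp [Matrix.transpose_mul, hP', Matrix.mul_assoc]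
    rw [g1, g2]; ring
  ring_nf
  ring_nf (ifUnchanged := .silent) at f1 f2 f3 f4 f5 f6 f7 f8 f9 f10
  linarith [f1, f2, f3, f4, f5, f6, f7, f8, f9, f10]

lemma blockDiagonal_mulVec' {nw Nn : ℕ} (D : Fin Nn → Matrix (Fin nw) (Fin nw) ℝ)
    (v : Fin nw × Fin Nn → ℝ) (i : Fin nw) (k : Fin Nn) :
    (Matrix.blockDiagonal D *ᵥ v) (i, k) = (D k *ᵥ fun j => v (j, k)) i := by
  simp only [Matrix.mulVec, dotProduct, Fintype.sum_prod_type_right,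
    Matrix.blockDiagonal_apply, ite_mul, zero_mul]
  rw [Finset.sum_comm]
  simp

lemma dot_blockDiagonal {nw Nn : ℕ} (D : Fin Nn → Matrix (Fin nw) (Fin nw) ℝ)
    (u v : Fin nw × Fin Nn → ℝ) :
    u ⬝ᵥ (Matrix.blockDiagonal D *ᵥ v)
      = ∑ τ : Fin Nn, (fun i => u (i, τ)) ⬝ᵥ (D τ *ᵥ fun i => v (i, τ)) := by
  rw [dotProduct, Fintype.sum_prod_type_right]
  refine Finset.sum_congr rfl fun τ _ => ?_
  rw [dotProduct]
  exact Finset.sum_congr rfl fun i _ => by rw [blockDiagonal_mulVec']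

lemma quad_min {n : Type*} [Fintype n] [DecidableEq n]
    (M : Matrix n n ℝ) (hM : M.PosDef) (b : n → ℝ) :
    ∃ vs : n → ℝ, M *ᵥ vs = -b ∧
      ∀ v, (1/2) * (vs ⬝ᵥ M *ᵥ vs) + b ⬝ᵥ vs ≤ (1/2) * (v ⬝ᵥ M *ᵥ v) + b ⬝ᵥ v := by
  have hdet : IsUnit M.det := isUnit_iff_ne_zero.mpr hM.det_pos.ne'
  have hMvs : M *ᵥ (M⁻¹ *ᵥ (-b)) = -b := by
    rw [Matrix.mulVec_mulVec, Matrix.mul_nonsing_inv _ hdet, Matrix.one_mulVec]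
  refine ⟨M⁻¹ *ᵥ (-b), hMvs, fun v => ?_⟩
  set vs := M⁻¹ *ᵥ (-b) with hvs
  have hMs : Mᵀ = M := by
    have h := hM.1
    rwa [Matrix.IsHermitian, Matrix.conjTranspose_eq_transpose_of_trivial] at h
  have hpsd : 0 ≤ (v - vs) ⬝ᵥ M *ᵥ (v - vs) := by
    have h := hM.posSemidef.dotProduct_mulVec_nonneg (v - vs); simpa using h
  have hflip : vs ⬝ᵥ M *ᵥ v = v ⬝ᵥ M *ᵥ vs := by rw [dv_swap, hMs]
  have h1 : v ⬝ᵥ M *ᵥ vs = -(b ⬝ᵥ v) := by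
    rw [hMvs, dotProduct_neg, dotProduct_comm]
  have h2 : vs ⬝ᵥ M *ᵥ vs = -(b ⬝ᵥ vs) := by
    rw [hMvs, dotProduct_neg, dotProduct_comm]
  have hexp : (v - vs) ⬝ᵥ M *ᵥ (v - vs)
      = (v ⬝ᵥ M *ᵥ v) + 2 * (b ⬝ᵥ v) - (b ⬝ᵥ vs) := by
    simp only [Matrix.mulVec_sub, dotProduct_sub, sub_dotProduct, hflip, h1, h2]
    ring
  have h3 : vs ⬝ᵥ M *ᵥ vs = -(b ⬝ᵥ vs) := h2
  nlinarith [hpsd, hexp, h3]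

lemma blockDiagonal_posDef {nw Nn : ℕ} (D : Fin Nn → Matrix (Fin nw) (Fin nw) ℝ)
    (hD : ∀ τ, (D τ).PosDef) : (Matrix.blockDiagonal D).PosDef := by
  refine Matrix.PosDef.of_dotProduct_mulVec_pos ?_ ?_
  · rw [Matrix.IsHermitian, Matrix.conjTranspose_eq_transpose_of_trivial,
      Matrix.blockDiagonal_transpose]
    have h : (fun k => (D k)ᵀ) = D := by
      funext τ
      have h := (hD τ).1
      rwa [Matrix.IsHermitian, Matrix.conjTranspose_eq_transpose_of_trivial] at h
    rw [h]
  · intro x hx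
    have hx' : ∃ p, x p ≠ 0 := by
      by_contra h; push_neg at h; exact hx (funext h)
    obtain ⟨⟨i0, τ0⟩, hp⟩ := hx'
    have key : x ⬝ᵥ (Matrix.blockDiagonal D *ᵥ x)
        = ∑ τ : Fin Nn, (fun i => x (i, τ)) ⬝ᵥ (D τ *ᵥ fun i => x (i, τ)) :=
      dot_blockDiagonal D x x
    have hpos : 0 < x ⬝ᵥ (Matrix.blockDiagonal D *ᵥ x) := by
      rw [key]
      refine Finset.sum_pos' (fun τ _ => ?_) ⟨τ0, Finset.mem_univ _, ?_⟩
      · have h := (hD τ).posSemidef.dotProduct_mulVec_nonneg (fun i => x (i, τ)); simpa using h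
      · have hne : (fun i => x (i, τ0)) ≠ 0 := fun h => hp (congrFun h i0)
        have h := (hD τ0).dotProduct_mulVec_pos hne; simpa using h
    simpa using hpos

lemma mulVec_sum' {m n : Type*} [Fintype m] [Fintype n] {ι : Type*} (s : Finset ι)
    (M : Matrix m n ℝ) (f : ι → n → ℝ) :
    M *ᵥ (∑ i ∈ s, f i) = ∑ i ∈ s, M *ᵥ f i :=
  map_sum (Matrix.mulVecLin M) f s

set_option maxHeartbeats 2000000 in
/-- Theorem 1: reduction of a UFTOC subproblem.  For any (unknown) terminal data
`P̂ ⪰ 0`, `Ψ̂`, `ĉ'`, the subproblem over the full horizon and the reduced problem with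
a single input `ŵ ∈ ℝ^{n_x}` have equal, attained optimal values. -/
theorem uftoc_subproblem_reduction
    (nx nw N : ℕ) (hN : 1 ≤ N)
    (A : ℕ → Matrix (Fin nx) (Fin nx) ℝ)
    (B : ℕ → Matrix (Fin nx) (Fin nw) ℝ)
    (a : ℕ → Fin nx → ℝ)
    (Qx : ℕ → Matrix (Fin nx) (Fin nx) ℝ)
    (Qxw : ℕ → Matrix (Fin nx) (Fin nw) ℝ)
    (Qw : ℕ → Matrix (Fin nw) (Fin nw) ℝ)
    (lx : ℕ → Fin nx → ℝ) (lw : ℕ → Fin nw → ℝ) (c : ℕ → ℝ)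
    (hQ : ∀ t < N, (Matrix.fromBlocks (Qx t) (Qxw t) (Qxw t)ᵀ (Qw t)).PosSemidef)
    -- preliminary (zero-terminal) Riccati recursion quantities
    (P : ℕ → Matrix (Fin nx) (Fin nx) ℝ)
    (Ψ : ℕ → Fin nx → ℝ) (cb : ℕ → ℝ)
    (G : ℕ → Matrix (Fin nw) (Fin nw) ℝ)
    (K : ℕ → Matrix (Fin nw) (Fin nx) ℝ)
    (k : ℕ → Fin nw → ℝ)
    (hPN : P N = 0) (hΨN : Ψ N = 0) (hcbN : cb N = 0)
    (hGdef : ∀ t < N, G (t + 1) = Qw t + (B t)ᵀ * P (t + 1) * B t)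
    (hGpd : ∀ t < N, (G (t + 1)).PosDef)
    (hKdef : ∀ t < N,
      K (t + 1) = -((G (t + 1))⁻¹ * (Qxw t + (A t)ᵀ * P (t + 1) * B t)ᵀ))
    (hkdef : ∀ t < N,
      k (t + 1) = (G (t + 1))⁻¹ *ᵥ
        ((B t)ᵀ *ᵥ Ψ (t + 1) - lw t - (B t)ᵀ *ᵥ (P (t + 1) *ᵥ a t)))
    (hPdef : ∀ t < N,
      P t = Qx t + (A t)ᵀ * P (t + 1) * A t - (K (t + 1))ᵀ * G (t + 1) * K (t + 1))
    (hΨdef : ∀ t < N,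
      Ψ t = (A t)ᵀ *ᵥ Ψ (t + 1) - (Qxw t + (A t)ᵀ * P (t + 1) * B t) *ᵥ k (t + 1)
            - lx t - (A t)ᵀ *ᵥ (P (t + 1) *ᵥ a t))
    (hcbdef : ∀ t < N,
      cb t = cb (t + 1) + (1 / 2) * (a t ⬝ᵥ (P (t + 1) *ᵥ a t)) - Ψ (t + 1) ⬝ᵥ a t
             - (1 / 2) * (k (t + 1) ⬝ᵥ (G (t + 1) *ᵥ k (t + 1))) + c t)
    -- closed-loop quantities of the preliminary feedback
    (Ah : Matrix (Fin nx) (Fin nx) ℝ)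
    (hAh : Ah = stm nx (fun t => A t + B t * K (t + 1)) 0 N)
    (S : Matrix (Fin nx) (Fin nw × Fin N) ℝ)
    (hS : S = fun i p =>
      (stm nx (fun t => A t + B t * K (t + 1)) ((p.2 : ℕ) + 1) N * B (p.2 : ℕ)) i p.1)
    (ah : Fin nx → ℝ)
    (hah : ah = ∑ τ ∈ Finset.range N,
      stm nx (fun t => A t + B t * K (t + 1)) (τ + 1) N *ᵥ (a τ + B τ *ᵥ k (τ + 1)))
    -- reduced problem data
    (Qbar : Matrix (Fin nw × Fin N) (Fin nw × Fin N) ℝ)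
    (hQbar : Qbar = Matrix.blockDiagonal (fun τ : Fin N => G ((τ : ℕ) + 1)))
    (Qwh : Matrix (Fin nx) (Fin nx) ℝ)
    (hQwh : Qwh = S * Qbar⁻¹ * Sᵀ)
    -- unknown terminal data and initial state
    (Ph : Matrix (Fin nx) (Fin nx) ℝ) (hPh : Ph.PosSemidef)
    (Ψh : Fin nx → ℝ) (ch' : ℝ) (xh : Fin nx → ℝ) :
    ∃ x : ℕ → Fin nx → ℝ, ∃ w : ℕ → Fin nw → ℝ,
      x 0 = xh ∧ (∀ t < N, x (t + 1) = A t *ᵥ x t + B t *ᵥ w t + a t)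
      ∧ (∀ x' : ℕ → Fin nx → ℝ, ∀ w' : ℕ → Fin nw → ℝ,
          x' 0 = xh → (∀ t < N, x' (t + 1) = A t *ᵥ x' t + B t *ᵥ w' t + a t) →
          subCost nx nw N Qx Qxw Qw lx lw c Ph Ψh ch' x w
            ≤ subCost nx nw N Qx Qxw Qw lx lw c Ph Ψh ch' x' w')
      ∧ ∃ wh : Fin nx → ℝ,
          (∀ wh' : Fin nx → ℝ,
            redCost nx (P 0) Qwh Ah (-Ψ 0) ah (cb 0) Ph Ψh ch' xh wh
              ≤ redCost nx (P 0) Qwh Ah (-Ψ 0) ah (cb 0) Ph Ψh ch' xh wh')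
          ∧ redCost nx (P 0) Qwh Ah (-Ψ 0) ah (cb 0) Ph Ψh ch' xh wh
              = subCost nx nw N Qx Qxw Qw lx lw c Ph Ψh ch' x w := by
  classical
  -- block symmetry facts
  have hQxs : ∀ t, t < N → (Qx t)ᵀ = Qx t := by
    intro t ht
    have h := (hQ t ht).1
    rw [Matrix.IsHermitian, Matrix.conjTranspose_eq_transpose_of_trivial,
      Matrix.fromBlocks_transpose] at h
    ext i j
    have h2 := congrFun (congrFun h (Sum.inl i)) (Sum.inl j)
    simpa using h2
  have hGs : ∀ t, t < N → (G (t + 1))ᵀ = G (t + 1) := by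
    intro t ht
    have h := (hGpd t ht).1
    rwa [Matrix.IsHermitian, Matrix.conjTranspose_eq_transpose_of_trivial] at h
  have hGdet : ∀ t, t < N → IsUnit (G (t + 1)).det := fun t ht =>
    isUnit_iff_ne_zero.mpr (hGpd t ht).det_pos.ne'
  have hGK : ∀ t, t < N → G (t + 1) * K (t + 1) = -(Qxw t + (A t)ᵀ * P (t + 1) * B t)ᵀ := by
    intro t ht
    rw [hKdef t ht, Matrix.mul_neg, ← Matrix.mul_assoc, Matrix.mul_nonsing_inv _ (hGdet t ht),
      Matrix.one_mul]
  have hGk : ∀ t, t < N → G (t + 1) *ᵥ k (t + 1)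
      = (B t)ᵀ *ᵥ Ψ (t + 1) - lw t - (B t)ᵀ *ᵥ (P (t + 1) *ᵥ a t) := by
    intro t ht
    rw [hkdef t ht, Matrix.mulVec_mulVec, Matrix.mul_nonsing_inv _ (hGdet t ht),
      Matrix.one_mulVec]
  have hPsym : ∀ d t, t + d = N → (P t)ᵀ = P t := by
    intro d
    induction d with
    | zero =>
      intro t ht
      have h : t = N := by omega
      rw [h, hPN]; simp
    | succ d ih =>
      intro t ht
      have htN : t < N := by omega
      have h1 : (P (t + 1))ᵀ = P (t + 1) := ih (t + 1) (by omega)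
      rw [hPdef t htN]
      simp only [Matrix.transpose_sub, Matrix.transpose_add, Matrix.transpose_mul,
        Matrix.transpose_transpose, h1, hQxs t htN, hGs t htN, Matrix.mul_assoc]
  -- closed-loop matrices
  set Ab : ℕ → Matrix (Fin nx) (Fin nx) ℝ := fun t => A t + B t * K (t + 1) with hAb
  have stm_succ : ∀ i j, i ≤ j → stm nx Ab i (j + 1) = Ab j * stm nx Ab i j := by
    intro i j h; simp [stm, h]
  have stm_self : ∀ i, stm nx Ab i i = 1 := by
    intro i
    cases i with
    | zero => rfl
    | succ j => simp [stm]
  -- telescoping completion of squares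
  have key : ∀ (x : ℕ → Fin nx → ℝ) (w : ℕ → Fin nw → ℝ),
      (∀ t < N, x (t + 1) = A t *ᵥ x t + B t *ᵥ w t + a t) →
      ∀ d m, m + d = N →
      (∑ t ∈ Finset.Ico m N,
        ((1 / 2) * (Sum.elim (x t) (w t) ⬝ᵥ
            (Matrix.fromBlocks (Qx t) (Qxw t) (Qxw t)ᵀ (Qw t) *ᵥ Sum.elim (x t) (w t)))
          + Sum.elim (lx t) (lw t) ⬝ᵥ Sum.elim (x t) (w t) + c t))
      = ((1 / 2) * (x m ⬝ᵥ P m *ᵥ x m) - Ψ m ⬝ᵥ x m + cb m)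
        + ∑ t ∈ Finset.Ico m N, (1 / 2) *
            ((w t - K (t + 1) *ᵥ x t - k (t + 1)) ⬝ᵥ
              G (t + 1) *ᵥ (w t - K (t + 1) *ᵥ x t - k (t + 1))) := by
    intro x w hdyn d
    induction d with
    | zero =>
      intro m hm
      have h : m = N := by omega
      subst h
      simp [hPN, hΨN, hcbN]
    | succ d ih =>
      intro m hm
      have hmN : m < N := by omega
      rw [Finset.sum_eq_sum_Ico_succ_bot hmN, Finset.sum_eq_sum_Ico_succ_bot hmN,
        ih (m + 1) (by omega)]
      have hstep := onestep (A m) (B m) (a m) (Qx m) (Qxw m) (Qw m) (lx m) (lw m) (c m)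
        (P (m + 1)) (Ψ (m + 1)) (cb (m + 1)) (G (m + 1)) (K (m + 1)) (k (m + 1))
        (P m) (Ψ m) (cb m)
        (hQxs m hmN) (hPsym (N - (m + 1)) (m + 1) (by omega)) (hGs m hmN)
        (hGK m hmN) (hGk m hmN) (hGdef m hmN) (hPdef m hmN) (hΨdef m hmN) (hcbdef m hmN)
        (x m) (w m)
      rw [← hdyn m hmN] at hstep
      linarith [hstep]
  -- closed form of the final state
  have hSv : ∀ v : ℕ → Fin nw → ℝ,
      S *ᵥ (fun p : Fin nw × Fin N => v (p.2 : ℕ) p.1)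
        = ∑ τ ∈ Finset.range N, (stm nx Ab (τ + 1) N * B τ) *ᵥ v τ := by
    intro v
    funext i
    rw [Matrix.mulVec, dotProduct, Fintype.sum_prod_type_right, Finset.sum_apply]
    rw [← Fin.sum_univ_eq_sum_range (fun τ => ((stm nx Ab (τ + 1) N * B τ) *ᵥ v τ) i) N]
    refine Finset.sum_congr rfl fun τ _ => ?_
    rw [hS, Matrix.mulVec, dotProduct]
  have xN_closed : ∀ (x : ℕ → Fin nx → ℝ) (w : ℕ → Fin nw → ℝ), x 0 = xh →
      (∀ t < N, x (t + 1) = A t *ᵥ x t + B t *ᵥ w t + a t) →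
      x N = Ah *ᵥ xh + ah
        + S *ᵥ (fun p : Fin nw × Fin N =>
            (w (p.2 : ℕ) - K ((p.2 : ℕ) + 1) *ᵥ x (p.2 : ℕ) - k ((p.2 : ℕ) + 1)) p.1) := by
    intro x w hx0 hdyn
    have hm : ∀ m, m ≤ N → x m = stm nx Ab 0 m *ᵥ xh
        + ∑ τ ∈ Finset.range m, stm nx Ab (τ + 1) m *ᵥ
            (a τ + B τ *ᵥ k (τ + 1) + B τ *ᵥ (w τ - K (τ + 1) *ᵥ x τ - k (τ + 1))) := by
      intro m
      induction m with
      | zero => intro _; simp [stm, Matrix.one_mulVec, hx0]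
      | succ m ihm =>
        intro hmN
        have hmN' : m < N := by omega
        have ih := ihm (by omega)
        have hxs : x (m + 1) = Ab m *ᵥ x m
            + (a m + B m *ᵥ k (m + 1) + B m *ᵥ (w m - K (m + 1) *ᵥ x m - k (m + 1))) := by
          rw [hdyn m hmN', hAb]
          simp only [Matrix.add_mulVec, Matrix.mulVec_sub, Matrix.mulVec_add,
            ← Matrix.mulVec_mulVec]
          abel
        have hsum : (∑ τ ∈ Finset.range m, stm nx Ab (τ + 1) (m + 1) *ᵥ
              (a τ + B τ *ᵥ k (τ + 1) + B τ *ᵥ (w τ - K (τ + 1) *ᵥ x τ - k (τ + 1))))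
            = ∑ τ ∈ Finset.range m, Ab m *ᵥ (stm nx Ab (τ + 1) m *ᵥ
              (a τ + B τ *ᵥ k (τ + 1) + B τ *ᵥ (w τ - K (τ + 1) *ᵥ x τ - k (τ + 1)))) := by
          refine Finset.sum_congr rfl fun τ hτ => ?_
          rw [stm_succ (τ + 1) m (Finset.mem_range.mp hτ), ← Matrix.mulVec_mulVec]
        rw [hxs, Finset.sum_range_succ, hsum, stm_self (m + 1), Matrix.one_mulVec,
          show stm nx Ab 0 (m + 1) *ᵥ xh = Ab m *ᵥ (stm nx Ab 0 m *ᵥ xh) from by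
            rw [stm_succ 0 m (Nat.zero_le m), ← Matrix.mulVec_mulVec],
          ih, Matrix.mulVec_add, mulVec_sum']
        abel
    have hN' := hm N le_rfl
    rw [hN', hSv (fun t => w t - K (t + 1) *ᵥ x t - k (t + 1)), hah, hAh]
    have hsplit : (∑ τ ∈ Finset.range N, stm nx Ab (τ + 1) N *ᵥ
          (a τ + B τ *ᵥ k (τ + 1) + B τ *ᵥ (w τ - K (τ + 1) *ᵥ x τ - k (τ + 1))))
        = (∑ τ ∈ Finset.range N, stm nx Ab (τ + 1) N *ᵥ (a τ + B τ *ᵥ k (τ + 1)))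
          + ∑ τ ∈ Finset.range N, (stm nx Ab (τ + 1) N * B τ) *ᵥ
              (w τ - K (τ + 1) *ᵥ x τ - k (τ + 1)) := by
      rw [← Finset.sum_add_distrib]
      refine Finset.sum_congr rfl fun τ _ => ?_
      rw [Matrix.mulVec_add, ← Matrix.mulVec_mulVec]
    rw [hsplit]
    abel
  -- definiteness facts
  have hPhs : Phᵀ = Ph := by
    have h := hPh.1
    rwa [Matrix.IsHermitian, Matrix.conjTranspose_eq_transpose_of_trivial] at h
  have hQbarPD : Qbar.PosDef := by
    rw [hQbar]
    exact blockDiagonal_posDef _ (fun τ => hGpd (τ : ℕ) τ.isLt)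
  have hQbars : Qbarᵀ = Qbar := by
    have h := hQbarPD.1
    rwa [Matrix.IsHermitian, Matrix.conjTranspose_eq_transpose_of_trivial] at h
  have hQdet : IsUnit Qbar.det := isUnit_iff_ne_zero.mpr hQbarPD.det_pos.ne'
  have hSPS : (Sᵀ * Ph * S).PosSemidef := by
    have h := hPh.conjTranspose_mul_mul_same S
    rwa [Matrix.conjTranspose_eq_transpose_of_trivial] at h
  have hMvPD : (Qbar + Sᵀ * Ph * S).PosDef := hQbarPD.add_posSemidef hSPS
  -- quadratic expansion of the terminal cost
  have hΦquad : ∀ vv : Fin nw × Fin N → ℝ,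
      (1 / 2) * (vv ⬝ᵥ Qbar *ᵥ vv)
        + ((1 / 2) * ((Ah *ᵥ xh + ah + S *ᵥ vv) ⬝ᵥ Ph *ᵥ (Ah *ᵥ xh + ah + S *ᵥ vv))
            - Ψh ⬝ᵥ (Ah *ᵥ xh + ah + S *ᵥ vv))
      = ((1 / 2) * (vv ⬝ᵥ (Qbar + Sᵀ * Ph * S) *ᵥ vv)
            + (Sᵀ *ᵥ (Ph *ᵥ (Ah *ᵥ xh + ah) - Ψh)) ⬝ᵥ vv)
        + ((1 / 2) * ((Ah *ᵥ xh + ah) ⬝ᵥ Ph *ᵥ (Ah *ᵥ xh + ah)) - Ψh ⬝ᵥ (Ah *ᵥ xh + ah)) := by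
    intro vv
    obtain ⟨y0, hy0⟩ : ∃ y0, Ah *ᵥ xh + ah = y0 := ⟨_, rfl⟩
    rw [hy0]
    simp only [Matrix.mulVec_add, Matrix.add_mulVec, dotProduct_add,
      add_dotProduct, Matrix.mulVec_sub, dotProduct_sub, sub_dotProduct,
      mdv, Matrix.mulVec_mulVec, Matrix.transpose_transpose, Matrix.transpose_mul,
      Matrix.mul_assoc, hPhs]
    have g1 : y0 ⬝ᵥ (Ph * S) *ᵥ vv = vv ⬝ᵥ (Sᵀ * Ph) *ᵥ y0 := by
      rw [dv_swap]; congr 1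
      simp [Matrix.transpose_mul, hPhs]
    ring_nf
    ring_nf (ifUnchanged := .silent) at g1
    linarith [g1]
  -- value of the subproblem cost along any admissible trajectory
  have hsub : ∀ (x : ℕ → Fin nx → ℝ) (w : ℕ → Fin nw → ℝ), x 0 = xh →
      (∀ t < N, x (t + 1) = A t *ᵥ x t + B t *ᵥ w t + a t) →
      subCost nx nw N Qx Qxw Qw lx lw c Ph Ψh ch' x w
        = (((1 / 2) * (xh ⬝ᵥ P 0 *ᵥ xh) - Ψ 0 ⬝ᵥ xh + cb 0)
          + ((1 / 2) * ((Ah *ᵥ xh + ah) ⬝ᵥ Ph *ᵥ (Ah *ᵥ xh + ah)) - Ψh ⬝ᵥ (Ah *ᵥ xh + ah) + ch'))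
          + ((1 / 2) * ((fun p : Fin nw × Fin N =>
                (w (p.2 : ℕ) - K ((p.2 : ℕ) + 1) *ᵥ x (p.2 : ℕ) - k ((p.2 : ℕ) + 1)) p.1)
              ⬝ᵥ (Qbar + Sᵀ * Ph * S) *ᵥ (fun p : Fin nw × Fin N =>
                (w (p.2 : ℕ) - K ((p.2 : ℕ) + 1) *ᵥ x (p.2 : ℕ) - k ((p.2 : ℕ) + 1)) p.1))
            + (Sᵀ *ᵥ (Ph *ᵥ (Ah *ᵥ xh + ah) - Ψh)) ⬝ᵥ (fun p : Fin nw × Fin N =>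
                (w (p.2 : ℕ) - K ((p.2 : ℕ) + 1) *ᵥ x (p.2 : ℕ) - k ((p.2 : ℕ) + 1)) p.1)) := by
    intro x w hx0 hdyn
    have hkey := key x w hdyn N 0 (by omega)
    have hss : (∑ t ∈ Finset.Ico 0 N, (1 / 2) *
          ((w t - K (t + 1) *ᵥ x t - k (t + 1)) ⬝ᵥ
            G (t + 1) *ᵥ (w t - K (t + 1) *ᵥ x t - k (t + 1))))
        = (1 / 2) * ((fun p : Fin nw × Fin N =>
              (w (p.2 : ℕ) - K ((p.2 : ℕ) + 1) *ᵥ x (p.2 : ℕ) - k ((p.2 : ℕ) + 1)) p.1)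
            ⬝ᵥ Qbar *ᵥ (fun p : Fin nw × Fin N =>
              (w (p.2 : ℕ) - K ((p.2 : ℕ) + 1) *ᵥ x (p.2 : ℕ) - k ((p.2 : ℕ) + 1)) p.1)) := by
      rw [hQbar, dot_blockDiagonal, Finset.mul_sum, ← Finset.range_eq_Ico,
        ← Fin.sum_univ_eq_sum_range (fun t => (1 / 2) *
          ((w t - K (t + 1) *ᵥ x t - k (t + 1)) ⬝ᵥ
            G (t + 1) *ᵥ (w t - K (t + 1) *ᵥ x t - k (t + 1)))) N]
    have hxN := xN_closed x w hx0 hdyn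
    simp only [subCost]
    rw [Finset.range_eq_Ico, hkey, hss, hxN, hx0]
    have h := hΦquad (fun p : Fin nw × Fin N =>
      (w (p.2 : ℕ) - K ((p.2 : ℕ) + 1) *ᵥ x (p.2 : ℕ) - k ((p.2 : ℕ) + 1)) p.1)
    linarith [h]
  -- minimizer of the reduced quadratic
  obtain ⟨vstar, hvstar, hvmin⟩ := quad_min _ hMvPD (Sᵀ *ᵥ (Ph *ᵥ (Ah *ᵥ xh + ah) - Ψh))
  -- value of the reduced cost
  have hred : ∀ wh' : Fin nx → ℝ,
      redCost nx (P 0) Qwh Ah (-Ψ 0) ah (cb 0) Ph Ψh ch' xh wh'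
        = (((1 / 2) * (xh ⬝ᵥ P 0 *ᵥ xh) - Ψ 0 ⬝ᵥ xh + cb 0)
          + ((1 / 2) * ((Ah *ᵥ xh + ah) ⬝ᵥ Ph *ᵥ (Ah *ᵥ xh + ah)) - Ψh ⬝ᵥ (Ah *ᵥ xh + ah) + ch'))
          + ((1 / 2) * ((Qbar⁻¹ *ᵥ (Sᵀ *ᵥ wh')) ⬝ᵥ (Qbar + Sᵀ * Ph * S) *ᵥ (Qbar⁻¹ *ᵥ (Sᵀ *ᵥ wh')))
              + (Sᵀ *ᵥ (Ph *ᵥ (Ah *ᵥ xh + ah) - Ψh)) ⬝ᵥ (Qbar⁻¹ *ᵥ (Sᵀ *ᵥ wh'))) := by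
    intro wh'
    have hSv2 : S *ᵥ (Qbar⁻¹ *ᵥ (Sᵀ *ᵥ wh')) = Qwh *ᵥ wh' := by
      rw [Matrix.mulVec_mulVec, Matrix.mulVec_mulVec, hQwh]
    have hz : Qbar *ᵥ (Qbar⁻¹ *ᵥ (Sᵀ *ᵥ wh')) = Sᵀ *ᵥ wh' := by
      rw [Matrix.mulVec_mulVec, Matrix.mul_nonsing_inv _ hQdet, Matrix.one_mulVec]
    have hq2 : (Qbar⁻¹ *ᵥ (Sᵀ *ᵥ wh')) ⬝ᵥ Qbar *ᵥ (Qbar⁻¹ *ᵥ (Sᵀ *ᵥ wh'))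
        = wh' ⬝ᵥ Qwh *ᵥ wh' := by
      rw [hz, mdv, Matrix.transpose_nonsing_inv, hQbars]
      conv_rhs => rw [← hSv2, dv_swap, mdv, Matrix.transpose_nonsing_inv, hQbars]
    have hyN : Ah *ᵥ xh + Qwh *ᵥ wh' + ah
        = Ah *ᵥ xh + ah + S *ᵥ (Qbar⁻¹ *ᵥ (Sᵀ *ᵥ wh')) := by
      rw [hSv2]; abel
    simp only [redCost]
    rw [hyN, ← hq2]
    have h := hΦquad (Qbar⁻¹ *ᵥ (Sᵀ *ᵥ wh'))
    simp only [neg_dotProduct]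
    linarith [h]
  -- the optimal input correction sequence
  obtain ⟨vS, hvS⟩ : ∃ f : ℕ → Fin nw → ℝ, ∀ t (h : t < N), f t = fun i => vstar (i, ⟨t, h⟩) :=
    ⟨fun t i => if h : t < N then vstar (i, ⟨t, h⟩) else 0,
      fun t h => by funext i; simp [h]⟩
  -- the optimal trajectory
  set xS : ℕ → Fin nx → ℝ := fun t => Nat.rec (motive := fun _ => Fin nx → ℝ) xh
    (fun s xs => A s *ᵥ xs + B s *ᵥ (K (s + 1) *ᵥ xs + k (s + 1) + vS s) + a s) t with hxS
  set wS : ℕ → Fin nw → ℝ := fun t => K (t + 1) *ᵥ xS t + k (t + 1) + vS t with hwS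
  have hxS0 : xS 0 = xh := rfl
  have hdynS : ∀ t, t < N → xS (t + 1) = A t *ᵥ xS t + B t *ᵥ wS t + a t := by
    intro t _
    simp only [hwS]
    rfl
  have hVfS : (fun p : Fin nw × Fin N =>
      (wS (p.2 : ℕ) - K ((p.2 : ℕ) + 1) *ᵥ xS (p.2 : ℕ) - k ((p.2 : ℕ) + 1)) p.1) = vstar := by
    funext p
    obtain ⟨i, τ⟩ := p
    show (wS (τ : ℕ) - K ((τ : ℕ) + 1) *ᵥ xS (τ : ℕ) - k ((τ : ℕ) + 1)) i = vstar (i, τ)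
    have h1 : wS (τ : ℕ) - K ((τ : ℕ) + 1) *ᵥ xS (τ : ℕ) - k ((τ : ℕ) + 1) = vS (τ : ℕ) := by
      simp only [hwS]; abel
    rw [h1, hvS (τ : ℕ) τ.isLt]
  -- the optimal reduced input reproduces vstar
  have hvw : Qbar⁻¹ *ᵥ (Sᵀ *ᵥ (Ψh - Ph *ᵥ (Ah *ᵥ xh + ah + S *ᵥ vstar))) = vstar := by
    have e1 : Sᵀ *ᵥ (Ψh - Ph *ᵥ (Ah *ᵥ xh + ah + S *ᵥ vstar))
        = Sᵀ *ᵥ Ψh - Sᵀ *ᵥ (Ph *ᵥ (Ah *ᵥ xh + ah)) - (Sᵀ * Ph * S) *ᵥ vstar := by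
      simp only [Matrix.mulVec_add, Matrix.mulVec_sub, Matrix.mulVec_mulVec, Matrix.mul_assoc]
      abel
    have h3 := hvstar
    rw [Matrix.add_mulVec, Matrix.mulVec_sub] at h3
    have h5 := eq_sub_of_add_eq h3
    have h1 : Sᵀ *ᵥ (Ψh - Ph *ᵥ (Ah *ᵥ xh + ah + S *ᵥ vstar)) = Qbar *ᵥ vstar := by
      rw [e1, h5]; abel
    rw [h1, Matrix.mulVec_mulVec, Matrix.nonsing_inv_mul _ hQdet, Matrix.one_mulVec]
  refine ⟨xS, wS, hxS0, hdynS, ?_, ?_⟩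
  · intro x' w' hx0' hdyn'
    rw [hsub xS wS hxS0 hdynS, hsub x' w' hx0' hdyn', hVfS]
    have h := hvmin (fun p : Fin nw × Fin N =>
      (w' (p.2 : ℕ) - K ((p.2 : ℕ) + 1) *ᵥ x' (p.2 : ℕ) - k ((p.2 : ℕ) + 1)) p.1)
    linarith
  · refine ⟨Ψh - Ph *ᵥ (Ah *ᵥ xh + ah + S *ᵥ vstar), fun wh' => ?_, ?_⟩
    · rw [hred _, hred wh', hvw]
      have h := hvmin (Qbar⁻¹ *ᵥ (Sᵀ *ᵥ wh'))
      linarith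
    · rw [hred _, hvw, hsub xS wS hxS0 hdynS, hVfS]
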